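/- The sequence (g_n^(k)) with initial values 2^i is the unique strictly increasing k-bonacci sequence (with increasing initial values U_0 < U_1 < ⋯ < U_{k−1}) such that every positive integer has a unique k-Zeckendorf representation: if (h_n) satisfies h_n = Σ_{j=1}^k h_{n−j} for n ≥ k with h_0 < h_1 < ⋯ < h_{k−1} positive integers and every positive integer has a unique representation as a sum of distinct h_i with no k consecutive indices, then h_i = 2^i for 0 ≤ i ≤ k−1, hence h_n = g_n^(k) for all n. -/

import Mathlib

/-- Every natural number below `2^m` is a sum of distinct powers `2^i` with `i < m`. -/
lemma kbonacci_bin (m : ℕ) : ∀ x : ℕ, x < 2 ^ m →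
    ∃ S : Finset ℕ, S ⊆ Finset.range m ∧ x = ∑ i ∈ S, 2 ^ i := by
  induction m with
  | zero =>
    intro x hx
    refine ⟨∅, by simp, by simpa using (by omega : x = 0)⟩
  | succ m ih =>
    intro x hx
    rcases lt_or_ge x (2 ^ m) with h1 | h1
    · obtain ⟨S, hS, hsum⟩ := ih x h1
      exact ⟨S, hS.trans (Finset.range_subset_range.2 (by omega)), hsum⟩
    · have hx2 : x - 2 ^ m < 2 ^ m := by
        have : 2 ^ (m + 1) = 2 ^ m + 2 ^ m := by ring
        omega
      obtain ⟨S, hS, hsum⟩ := ih (x - 2 ^ m) hx2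
      have hm : m ∉ S := fun hm => by simpa using hS hm
      refine ⟨insert m S, ?_, ?_⟩
      · intro i hi
        rcases Finset.mem_insert.1 hi with rfl | hi
        · simp
        · exact Finset.mem_range.2 (by have := Finset.mem_range.1 (hS hi); omega)
      · rw [Finset.sum_insert hm, ← hsum]; omega

lemma kbonacci_geom (m : ℕ) : ∑ i ∈ Finset.range m, 2 ^ i = 2 ^ m - 1 := by
  induction m with
  | zero => simp
  | succ m ih =>
    rw [Finset.sum_range_succ, ih]
    have h1 : 1 ≤ 2 ^ m := Nat.one_le_two_pow
    have : 2 ^ (m + 1) = 2 ^ m + 2 ^ m := by ring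
    omega

theorem kbonacci_unique_sequence (k : ℕ) (hk : 2 ≤ k) (g : ℕ → ℕ)
    (hinit : ∀ i, i < k → g i = 2 ^ i)
    (hrec : ∀ n, k ≤ n → g n = ∑ j ∈ Finset.Icc 1 k, g (n - j))
    (h : ℕ → ℕ)
    (hpos : 0 < h 0)
    (hmono : ∀ i, i + 1 < k → h i < h (i + 1))
    (hhrec : ∀ n, k ≤ n → h n = ∑ j ∈ Finset.Icc 1 k, h (n - j))
    (hrep : ∀ x : ℕ, 0 < x →
      ∃! S : Finset ℕ, (¬ ∃ a, ∀ j, j < k → a + j ∈ S) ∧ x = ∑ i ∈ S, h i) :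
    (∀ i, i < k → h i = 2 ^ i) ∧ ∀ n, h n = g n := by
  -- positivity
  have hp : ∀ n, 0 < h n := by
    intro n
    induction n using Nat.strong_induction_on with
    | _ n ih =>
      rcases lt_or_ge n k with h1 | h1
      · match n with
        | 0 => exact hpos
        | m + 1 => exact (ih m (by omega)).trans (hmono m h1)
      · rw [hhrec n h1]
        apply Finset.sum_pos
        · intro j hj
          have hj' := Finset.mem_Icc.1 hj
          exact ih (n - j) (by omega)
        · exact ⟨1, Finset.mem_Icc.2 (by omega)⟩
  -- h is strictly monotone
  have hstep : ∀ n, h n < h (n + 1) := by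
    intro n
    rcases lt_or_ge (n + 1) k with h1 | h1
    · exact hmono n h1
    · rw [hhrec (n + 1) h1]
      have : h n = ∑ j ∈ ({1} : Finset ℕ), h (n + 1 - j) := by simp
      rw [this]
      refine Finset.sum_lt_sum_of_subset (i := 2) ?_ (Finset.mem_Icc.2 ⟨by omega, by omega⟩)
        (by simp) (hp (n + 1 - 2)) (fun j _ _ => Nat.zero_le _)
      intro j hj
      simp only [Finset.mem_singleton] at hj
      exact Finset.mem_Icc.2 (by omega)
  have hsm : StrictMono h := strictMono_nat_of_lt_succ hstep
  -- valid representations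
  have hvalid : ∀ (S : Finset ℕ) (n : ℕ), S ⊆ Finset.range n → n < k →
      ¬ ∃ a, ∀ j, j < k → a + j ∈ S := by
    rintro S n hS hn ⟨a, ha⟩
    have := Finset.mem_range.1 (hS (ha (k - 1) (by omega)))
    omega
  have hvalid1 : ∀ m : ℕ, ¬ ∃ a, ∀ j, j < k → a + j ∈ ({m} : Finset ℕ) := by
    rintro m ⟨a, ha⟩
    have h0 := Finset.mem_singleton.1 (ha 0 (by omega))
    have h1 := Finset.mem_singleton.1 (ha 1 (by omega))
    omega
  -- main claim
  have main : ∀ m, m < k → h m = 2 ^ m := by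
    intro m
    induction m using Nat.strong_induction_on with
    | _ m ih =>
      intro hmk
      -- lower bound : 2 ^ m ≤ h m
      have hlow : 2 ^ m ≤ h m := by
        by_contra hlt
        push_neg at hlt
        obtain ⟨S, hS, hsum⟩ := kbonacci_bin m (h m) hlt
        have hsum' : h m = ∑ i ∈ S, h i := by
          rw [hsum]
          apply Finset.sum_congr rfl
          intro i hi
          have hi' := Finset.mem_range.1 (hS hi)
          exact (ih i (by omega) (by omega)).symm
        obtain ⟨T, _, huniq⟩ := hrep (h m) (hp m)
        have e1 : S = T := huniq S ⟨hvalid S m hS hmk, hsum'⟩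
        have e2 : ({m} : Finset ℕ) = T := huniq {m} ⟨hvalid1 m, by simp⟩
        have : m ∈ S := by rw [e1, ← e2]; simp
        have := Finset.mem_range.1 (hS this)
        omega
      -- upper bound : h m ≤ 2 ^ m
      have hup : h m ≤ 2 ^ m := by
        obtain ⟨S, ⟨hSv, hSsum⟩, _⟩ := hrep (2 ^ m) (Nat.two_pow_pos m)
        by_cases hc : S ⊆ Finset.range m
        · exfalso
          have : (2 ^ m : ℕ) = ∑ i ∈ S, 2 ^ i := by
            rw [hSsum]
            apply Finset.sum_congr rfl
            intro i hi
            have hi' := Finset.mem_range.1 (hc hi)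
            exact ih i (by omega) (by omega)
          have hle : ∑ i ∈ S, 2 ^ i ≤ ∑ i ∈ Finset.range m, 2 ^ i :=
            Finset.sum_le_sum_of_subset hc
          rw [kbonacci_geom] at hle
          have h1 : (1 : ℕ) ≤ 2 ^ m := Nat.one_le_two_pow
          omega
        · rcases Finset.not_subset.1 hc with ⟨i, hiS, hir⟩
          have him : m ≤ i := by
            simp only [Finset.mem_range] at hir; omega
          have hhm : h m ≤ h i := hsm.le_iff_le.2 (by omega)
          have : h i ≤ ∑ j ∈ S, h j :=
            Finset.single_le_sum (fun j _ => Nat.zero_le _) hiS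
          omega
      omega
  refine ⟨main, ?_⟩
  intro n
  induction n using Nat.strong_induction_on with
  | _ n ih =>
    rcases lt_or_ge n k with h1 | h1
    · rw [main n h1, hinit n h1]
    · rw [hhrec n h1, hrec n h1]
      apply Finset.sum_congr rfl
      intro j hj
      have hj' := Finset.mem_Icc.1 hj
      exact ih (n - j) (by omega)
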